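/- For every N ≥ 1, the family of Schur polynomials { s_λ(x_1,…,x_N) : λ a partition with at most N nonzero parts } is a basis of the ℤ-module of symmetric polynomials in ℤ[x_1,…,x_N]. -/

import Mathlib

open MvPolynomial

/-- A partition: a weakly decreasing sequence of nonnegative integers, eventually zero
(0-based: `l 0` is `λ₁`). -/
def IsPartition (l : ℕ → ℕ) : Prop :=
  Antitone l ∧ ∃ M, ∀ i, M ≤ i → l i = 0

/-- The size `|λ| = Σ λᵢ` of a partition. -/
noncomputable def partSize (l : ℕ → ℕ) : ℕ := ∑ᶠ i, l i

/-- Membership of the cell `p = (row, column)` (0-based) in the skew shape `hi / lo`. -/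
def InSkewShape (lo hi : ℕ → ℕ) (p : ℕ × ℕ) : Prop :=
  lo p.1 ≤ p.2 ∧ p.2 < hi p.1

/-- A semistandard Young tableau of skew shape `hi / lo`, encoded as a function on cells
`(row, column)` (0-based) assigning the entry to each cell of the shape and `0` elsewhere:
entries in the shape are positive, rows weakly increase left to right, and columns
strictly increase downward. -/
def IsSkewSSYT (lo hi : ℕ → ℕ) (T : ℕ × ℕ → ℕ) : Prop :=
  (∀ p, InSkewShape lo hi p → 1 ≤ T p) ∧
  (∀ p, ¬ InSkewShape lo hi p → T p = 0) ∧
  (∀ i j j', InSkewShape lo hi (i, j) → j ≤ j' → InSkewShape lo hi (i, j') →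
    T (i, j) ≤ T (i, j')) ∧
  (∀ i j, InSkewShape lo hi (i, j) → InSkewShape lo hi (i + 1, j) →
    T (i, j) < T (i + 1, j))

/-- The number of entries of the tableau `T` equal to `m` (for `m ≥ 1` this counts cells
of the shape, since `T` vanishes off the shape). -/
noncomputable def entryCount (T : ℕ × ℕ → ℕ) (m : ℕ) : ℕ :=
  Set.ncard {p : ℕ × ℕ | T p = m}

/-- `T` has content `μ`: exactly `μ_m` entries equal `m` for each `m ≥ 1`
(`mu` is 0-based, so `mu m` is `μ_{m+1}`). -/
def HasContent (T : ℕ × ℕ → ℕ) (mu : ℕ → ℕ) : Prop :=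
  ∀ m : ℕ, entryCount T (m + 1) = mu m

/-- The monomial weight `x^T = ∏ᵢ xᵢ^(number of entries of `T` equal to `i`)`. -/
noncomputable def tabWeight (N : ℕ) (T : ℕ × ℕ → ℕ) : MvPolynomial (Fin N) ℤ :=
  ∏ i : Fin N, (X i) ^ entryCount T (i.val + 1)

/-- The Schur polynomial `s_λ(x_1, …, x_N) = Σ_T x^T`, summed over all semistandard
Young tableaux of shape `λ` with entries in `{1, …, N}`. -/
noncomputable def schurPoly (N : ℕ) (lam : ℕ → ℕ) : MvPolynomial (Fin N) ℤ :=
  ∑ᶠ T ∈ {T : ℕ × ℕ → ℕ | IsSkewSSYT (fun _ => 0) lam T ∧ ∀ p, T p ≤ N}, tabWeight N T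

/-- Count of the letter `m` in the suffix of the reading word of `T` beginning at position
`(i, j)`: the reading word concatenates rows bottom-to-top, so this suffix consists of the
cells of row `i` in columns `≥ j` together with all cells in rows `< i`. -/
noncomputable def suffixCount (T : ℕ × ℕ → ℕ) (i j m : ℕ) : ℕ :=
  Set.ncard {p : ℕ × ℕ | (p.1 < i ∨ (p.1 = i ∧ j ≤ p.2)) ∧ T p = m}

/-- The reading word of `T` (rows concatenated bottom to top, each left to right) is
Yamanouchi: every suffix contains at least as many letters `m` as letters `m + 1`. -/
def IsYamanouchi (T : ℕ × ℕ → ℕ) : Prop :=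
  ∀ i j m : ℕ, suffixCount T i j (m + 2) ≤ suffixCount T i j (m + 1)

namespace SchurAux
open Finset

/-- zero lower bound -/
abbrev zlo : ℕ → ℕ := fun _ => 0

lemma inShape_iff (lam : ℕ → ℕ) (p : ℕ × ℕ) :
    InSkewShape zlo lam p ↔ p.2 < lam p.1 := by
  simp [InSkewShape, zlo]

/-- The set of SSYT of shape `lam` with entries at most `N`. -/
def Tabs (N : ℕ) (lam : ℕ → ℕ) : Set (ℕ × ℕ → ℕ) :=
  {T | IsSkewSSYT zlo lam T ∧ ∀ p, T p ≤ N}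

variable {N : ℕ} {lam : ℕ → ℕ} {T : ℕ × ℕ → ℕ}

lemma ssyt_pos (h : IsSkewSSYT zlo lam T) {p : ℕ × ℕ} (hp : p.2 < lam p.1) : 1 ≤ T p :=
  h.1 p ((inShape_iff lam p).2 hp)

lemma ssyt_zero (h : IsSkewSSYT zlo lam T) {p : ℕ × ℕ} (hp : ¬ p.2 < lam p.1) : T p = 0 :=
  h.2.1 p (fun hc => hp ((inShape_iff lam p).1 hc))

lemma ssyt_row (h : IsSkewSSYT zlo lam T) {i j j' : ℕ} (hj : j ≤ j') (hj' : j' < lam i) :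
    T (i, j) ≤ T (i, j') :=
  h.2.2.1 i j j' ((inShape_iff lam _).2 (lt_of_le_of_lt hj hj')) hj ((inShape_iff lam _).2 hj')

lemma ssyt_col (h : IsSkewSSYT zlo lam T) {i j : ℕ} (hij : j < lam i) (hij' : j < lam (i+1)) :
    T (i, j) < T (i + 1, j) :=
  h.2.2.2 i j ((inShape_iff lam _).2 hij) ((inShape_iff lam _).2 hij')

lemma ssyt_ne_zero_iff (h : IsSkewSSYT zlo lam T) {p : ℕ × ℕ} : T p ≠ 0 ↔ p.2 < lam p.1 := by
  constructor
  · intro hne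
    by_contra hc
    exact hne (ssyt_zero h hc)
  · intro hp
    exact Nat.one_le_iff_ne_zero.1 (ssyt_pos h hp)

/-- entries are at least row index + 1 -/
lemma ssyt_entry_ge (h : IsSkewSSYT zlo lam T) (hmono : Antitone lam) :
    ∀ i j, j < lam i → i + 1 ≤ T (i, j) := by
  intro i
  induction i with
  | zero => intro j hj; exact ssyt_pos h hj
  | succ i ih =>
      intro j hj
      have hj' : j < lam i := lt_of_lt_of_le hj (hmono (Nat.le_succ i))
      have h2 := ssyt_col h hj' hj
      have h3 := ih j hj'
      omega

/-- The shape of a partition with at most `N` parts is finite. -/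
lemma shape_finite (hmono : Antitone lam) (hle : ∀ i, N ≤ i → lam i = 0) :
    Set.Finite {p : ℕ × ℕ | p.2 < lam p.1} := by
  apply Set.Finite.subset ((Set.finite_Iio N).prod (Set.finite_Iio (lam 0)))
  rintro ⟨i, j⟩ hp
  simp only [Set.mem_setOf_eq] at hp
  constructor
  · by_contra hc
    simp only [Set.mem_Iio, not_lt] at hc
    rw [hle i hc] at hp
    omega
  · exact lt_of_lt_of_le hp (hmono (Nat.zero_le i))

/-- The set of tableaux is finite. -/
lemma tabs_finite (hmono : Antitone lam) (hle : ∀ i, N ≤ i → lam i = 0) :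
    (Tabs N lam).Finite := by
  have hsf : Set.Finite {p : ℕ × ℕ | p.2 < lam p.1} := shape_finite hmono hle
  have : Finite ↥{p : ℕ × ℕ | p.2 < lam p.1} := hsf
  rw [← Set.finite_coe_iff]
  have hinj : Function.Injective
      (fun (T : ↥(Tabs N lam)) (p : ↥{p : ℕ × ℕ | p.2 < lam p.1}) =>
        (⟨T.1 p.1, Nat.lt_succ_of_le (T.2.2 p.1)⟩ : Fin (N+1))) := by
    intro T1 T2 hT
    ext p
    by_cases hp : p.2 < lam p.1
    · exact congrArg Fin.val (congrFun hT ⟨p, hp⟩)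
    · rw [ssyt_zero T1.2.1 hp, ssyt_zero T2.2.1 hp]
  exact Finite.of_injective _ hinj

/-- The content of a tableau, as a finitely supported function on `Fin N`. -/
noncomputable def content (N : ℕ) (T : ℕ × ℕ → ℕ) : Fin N →₀ ℕ :=
  Finsupp.equivFunOnFinite.symm fun i => entryCount T (i.1 + 1)

@[simp] lemma content_apply (i : Fin N) : content N T i = entryCount T (i.1 + 1) := rfl

lemma tabWeight_eq : tabWeight N T = monomial (content N T) 1 := by
  rw [tabWeight, monomial_eq, C_1, one_mul, Finsupp.prod_fintype]
  · rfl
  · intro i; exact pow_zero _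

lemma schurPoly_eq_sum (h : (Tabs N lam).Finite) :
    schurPoly N lam = ∑ T ∈ h.toFinset, tabWeight N T := by
  rw [schurPoly, ← finsum_mem_coe_finset, Set.Finite.coe_toFinset]
  rfl

lemma coeff_schurPoly (h : (Tabs N lam).Finite) (d : Fin N →₀ ℕ) :
    coeff d (schurPoly N lam) =
      ((h.toFinset.filter (fun T => content N T = d)).card : ℤ) := by
  rw [schurPoly_eq_sum h]
  rw [MvPolynomial.coeff_sum]
  rw [Finset.card_filter]
  push_cast
  apply Finset.sum_congr rfl
  intro T _
  rw [tabWeight_eq, coeff_monomial]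

end SchurAux
namespace SchurAux
open Finset

variable {N : ℕ} {lam : ℕ → ℕ} {T : ℕ × ℕ → ℕ}

lemma entryCount_eq_sum (hT : T ∈ Tabs N lam) (hmono : Antitone lam)
    (m : ℕ) (hm : 1 ≤ m) :
    entryCount T m =
      ∑ i ∈ range N, ((range (lam 0)).filter (fun j => T (i, j) = m)).card := by
  have hset : {p : ℕ × ℕ | T p = m} =
      ↑(((range N) ×ˢ (range (lam 0))).filter (fun p => T p = m)) := by
    ext ⟨i, j⟩
    simp only [Set.mem_setOf_eq, coe_filter, mem_product, mem_range, Set.mem_setOf_eq]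
    constructor
    · intro hTm
      have hne : T (i, j) ≠ 0 := by omega
      have hsh : j < lam i := (ssyt_ne_zero_iff hT.1).1 hne
      have hge := ssyt_entry_ge hT.1 hmono i j hsh
      have hle2 := hT.2 (i, j)
      exact ⟨⟨by omega, lt_of_lt_of_le hsh (hmono (Nat.zero_le i))⟩, hTm⟩
    · exact fun h => h.2
  rw [entryCount, hset, Set.ncard_coe_finset]
  rw [Finset.card_filter, Finset.sum_product]
  exact Finset.sum_congr rfl fun i _ => (Finset.card_filter _ _).symm

end SchurAux
namespace SchurAux
open Finset

variable {N : ℕ} {lam : ℕ → ℕ} {T : ℕ × ℕ → ℕ}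

lemma row_cnt_zero (hT : T ∈ Tabs N lam) (hmono : Antitone lam) (k : ℕ)
    (hfill : ∀ t, t < k → ∀ j, j < lam t → T (t, j) = t + 1)
    (i : ℕ) (hik : i ≠ k) :
    ((range (lam 0)).filter (fun j => T (i, j) = k + 1)).card = 0 := by
  rw [Finset.card_eq_zero, Finset.filter_eq_empty_iff]
  intro j hj hTij
  have hne : T (i, j) ≠ 0 := by omega
  have hsh : j < lam i := (ssyt_ne_zero_iff hT.1).1 hne
  have hge := ssyt_entry_ge hT.1 hmono i j hsh
  have hit : i < k := by omega
  have := hfill i hit j hsh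
  omega

lemma rows_filled (hT : T ∈ Tabs N lam) (hmono : Antitone lam)
    (hle : ∀ i, N ≤ i → lam i = 0)
    (k : ℕ) (hc : ∀ t, t < k → entryCount T (t + 1) = lam t) :
    ∀ t, t < k → ∀ j, j < lam t → T (t, j) = t + 1 := by
  intro t
  induction t using Nat.strong_induction_on with
  | _ t ih =>
    intro htk j hj
    have htN : t < N := by
      by_contra hc'
      rw [hle t (by omega)] at hj
      omega
    have hfill : ∀ t', t' < t → ∀ j', j' < lam t' → T (t', j') = t' + 1 :=
      fun t' ht' => ih t' ht' (lt_trans ht' htk)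
    have hsum := entryCount_eq_sum hT hmono (t + 1) (by omega)
    have hsingle : ∑ i ∈ range N, ((range (lam 0)).filter (fun j => T (i, j) = t + 1)).card
        = ((range (lam 0)).filter (fun j => T (t, j) = t + 1)).card := by
      apply Finset.sum_eq_single t
      · intro i _ hit
        exact row_cnt_zero hT hmono t hfill i hit
      · intro hni
        exact absurd (Finset.mem_range.2 htN) hni
    have hcnt : ((range (lam 0)).filter (fun j => T (t, j) = t + 1)).card = lam t := by
      rw [← hsingle, ← hsum, hc t htk]
    have hsub : (range (lam 0)).filter (fun j => T (t, j) = t + 1) ⊆ range (lam t) := by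
      intro j' hj'
      simp only [mem_filter, mem_range] at hj' ⊢
      have hne : T (t, j') ≠ 0 := by omega
      exact (ssyt_ne_zero_iff hT.1).1 hne
    have heq : (range (lam 0)).filter (fun j => T (t, j) = t + 1) = range (lam t) := by
      apply Finset.eq_of_subset_of_card_le hsub
      rw [hcnt, Finset.card_range]
    have : j ∈ (range (lam 0)).filter (fun j => T (t, j) = t + 1) := by
      rw [heq]; exact Finset.mem_range.2 hj
    exact (Finset.mem_filter.1 this).2

lemma entryCount_le (hT : T ∈ Tabs N lam) (hmono : Antitone lam)
    (hle : ∀ i, N ≤ i → lam i = 0)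
    (k : ℕ) (hc : ∀ t, t < k → entryCount T (t + 1) = lam t) :
    entryCount T (k + 1) ≤ lam k := by
  have hfill := rows_filled hT hmono hle k hc
  by_cases hkN : k < N
  · rw [entryCount_eq_sum hT hmono (k + 1) (by omega)]
    have hsingle : ∑ i ∈ range N, ((range (lam 0)).filter (fun j => T (i, j) = k + 1)).card
        = ((range (lam 0)).filter (fun j => T (k, j) = k + 1)).card := by
      apply Finset.sum_eq_single k
      · intro i _ hik
        exact row_cnt_zero hT hmono k hfill i hik
      · intro hni
        exact absurd (Finset.mem_range.2 hkN) hni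
    rw [hsingle]
    calc ((range (lam 0)).filter (fun j => T (k, j) = k + 1)).card
        ≤ (range (lam k)).card := by
          apply Finset.card_le_card
          intro j' hj'
          simp only [mem_filter, mem_range] at hj' ⊢
          have hne : T (k, j') ≠ 0 := by omega
          exact (ssyt_ne_zero_iff hT.1).1 hne
      _ = lam k := Finset.card_range _
  · have : {p : ℕ × ℕ | T p = k + 1} = ∅ := by
      ext p
      simp only [Set.mem_setOf_eq, Set.mem_empty_iff_false, iff_false]
      intro hp
      have := hT.2 p
      omega
    rw [entryCount, this, Set.ncard_empty]
    exact Nat.zero_le _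

/-- The canonical tableau of shape `lam`: row `i` is filled with `i + 1`. -/
def canonT (lam : ℕ → ℕ) : ℕ × ℕ → ℕ := fun p => if p.2 < lam p.1 then p.1 + 1 else 0

lemma canonT_mem (hmono : Antitone lam) (hle : ∀ i, N ≤ i → lam i = 0) :
    canonT lam ∈ Tabs N lam := by
  refine ⟨⟨?_, ?_, ?_, ?_⟩, ?_⟩
  · rintro ⟨i, j⟩ hp
    rw [inShape_iff] at hp
    simp only [canonT, if_pos hp]
    omega
  · rintro ⟨i, j⟩ hp
    rw [inShape_iff] at hp
    simp only [canonT, if_neg hp]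
  · intro i j j' hp _ hp'
    rw [inShape_iff] at hp hp'
    simp only [canonT, if_pos hp, if_pos hp']
    exact le_refl _
  · intro i j hp hp'
    rw [inShape_iff] at hp hp'
    simp only [canonT, if_pos hp, if_pos hp']
    omega
  · rintro ⟨i, j⟩
    simp only [canonT]
    split
    · rename_i hsh
      have : i < N := by
        by_contra hc
        rw [hle i (by omega)] at hsh
        omega
      omega
    · omega

lemma canonT_entryCount (m : ℕ) : entryCount (canonT lam) (m + 1) = lam m := by
  have hset : {p : ℕ × ℕ | canonT lam p = m + 1} = ↑(({m} : Finset ℕ) ×ˢ range (lam m)) := by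
    ext ⟨i, j⟩
    simp only [Set.mem_setOf_eq, coe_product, Set.mem_prod, coe_singleton,
      Set.mem_singleton_iff, coe_range, Set.mem_Iio, canonT]
    constructor
    · intro h
      by_cases hsh : j < lam i
      · rw [if_pos hsh] at h
        have : i = m := by omega
        subst this
        exact ⟨rfl, hsh⟩
      · rw [if_neg hsh] at h
        omega
    · rintro ⟨rfl, hj⟩
      rw [if_pos hj]
  rw [entryCount, hset, Set.ncard_coe_finset, Finset.card_product, Finset.card_singleton,
    Finset.card_range, one_mul]

/-- The partition `lam` as a finitely supported function on `Fin N`. -/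
noncomputable def partF (N : ℕ) (lam : ℕ → ℕ) : Fin N →₀ ℕ :=
  Finsupp.equivFunOnFinite.symm (fun i => lam i.1)

@[simp] lemma partF_apply (i : Fin N) : partF N lam i = lam i.1 := rfl

lemma content_canonT : content N (canonT lam) = partF N lam := by
  ext i
  rw [content_apply, partF_apply, canonT_entryCount]

lemma content_eq_canon (hT : T ∈ Tabs N lam) (hmono : Antitone lam)
    (hle : ∀ i, N ≤ i → lam i = 0) (h : content N T = partF N lam) : T = canonT lam := by
  funext p
  obtain ⟨i, j⟩ := p
  by_cases hsh : j < lam i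
  · have hiN : i < N := by
      by_contra hc
      rw [hle i (by omega)] at hsh
      omega
    have hc : ∀ t, t < i + 1 → entryCount T (t + 1) = lam t := by
      intro t ht
      have htN : t < N := by omega
      have := congrArg (fun f => f ⟨t, htN⟩) (congrArg Finsupp.toFun h)
      simpa using (show content N T ⟨t, htN⟩ = partF N lam ⟨t, htN⟩ from this)
    have := rows_filled hT hmono hle (i + 1) hc i (Nat.lt_succ_self i) j hsh
    rw [this]
    simp only [canonT, if_pos hsh]
  · rw [ssyt_zero hT.1 hsh]
    simp only [canonT, if_neg hsh]

lemma content_lt_of_ne (hT : T ∈ Tabs N lam) (hmono : Antitone lam)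
    (hle : ∀ i, N ≤ i → lam i = 0) (h : content N T ≠ partF N lam) :
    toLex (content N T) < toLex (partF N lam) := by
  classical
  have hex : ∃ t, t < N ∧ entryCount T (t + 1) ≠ lam t := by
    by_contra hc
    push_neg at hc
    apply h
    ext i
    rw [content_apply, partF_apply]
    exact hc i.1 i.2
  have hkN := (Nat.find_spec hex).1
  have hkne := (Nat.find_spec hex).2
  set k := Nat.find hex with hk
  have hmin : ∀ t, t < k → entryCount T (t + 1) = lam t := by
    intro t ht
    by_contra hc
    exact Nat.find_min hex ht ⟨by omega, hc⟩
  have hlt : entryCount T (k + 1) < lam k :=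
    lt_of_le_of_ne (entryCount_le hT hmono hle k hmin) hkne
  show Finsupp.Lex (· < ·) (· < ·) (content N T) (partF N lam)
  rw [Finsupp.lex_def]
  refine ⟨⟨k, hkN⟩, ?_, ?_⟩
  · intro d hd
    rw [content_apply, partF_apply]
    exact hmin d.1 hd
  · rw [content_apply, partF_apply]
    exact hlt

lemma content_le_lex (hT : T ∈ Tabs N lam) (hmono : Antitone lam)
    (hle : ∀ i, N ≤ i → lam i = 0) :
    toLex (content N T) ≤ toLex (partF N lam) := by
  by_cases h : content N T = partF N lam
  · exact le_of_eq (congrArg toLex h)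
  · exact le_of_lt (content_lt_of_ne hT hmono hle h)

lemma coeff_schurPoly_self (hmono : Antitone lam) (hle : ∀ i, N ≤ i → lam i = 0) :
    coeff (partF N lam) (schurPoly N lam) = 1 := by
  have hfin := tabs_finite hmono hle
  rw [coeff_schurPoly hfin]
  have : hfin.toFinset.filter (fun T => content N T = partF N lam) = {canonT lam} := by
    ext T
    simp only [mem_filter, Set.Finite.mem_toFinset, Finset.mem_singleton]
    constructor
    · rintro ⟨hT, hc⟩
      exact content_eq_canon hT hmono hle hc
    · rintro rfl
      exact ⟨canonT_mem hmono hle, content_canonT⟩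
  rw [this, Finset.card_singleton]
  norm_num

lemma coeff_schurPoly_zero (hmono : Antitone lam) (hle : ∀ i, N ≤ i → lam i = 0)
    (d : Fin N →₀ ℕ) (hd : ¬ toLex d ≤ toLex (partF N lam)) :
    coeff d (schurPoly N lam) = 0 := by
  have hfin := tabs_finite hmono hle
  rw [coeff_schurPoly hfin]
  have : hfin.toFinset.filter (fun T => content N T = d) = ∅ := by
    rw [Finset.filter_eq_empty_iff]
    intro T hT
    rw [Set.Finite.mem_toFinset] at hT
    intro hc
    apply hd
    rw [← hc]
    exact content_le_lex hT hmono hle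
  rw [this]
  norm_num

end SchurAux
namespace SchurAux
open Finset

/-! ### Interval lemmas -/

lemma downclosed_range {S : Finset ℕ} (hdc : ∀ j ∈ S, ∀ j', j' ≤ j → j' ∈ S) :
    S = range S.card := by
  ext j
  simp only [mem_range]
  constructor
  · intro hj
    have hsub : range (j + 1) ⊆ S := fun x hx =>
      hdc j hj x (by simpa [Nat.lt_succ_iff] using hx)
    have := Finset.card_le_card hsub
    rw [Finset.card_range] at this
    omega
  · intro hj
    by_contra hjS
    have hsub : S ⊆ range j := by
      intro x hx
      rw [mem_range]
      by_contra hc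
      exact hjS (hdc x hx j (by omega))
    have := Finset.card_le_card hsub
    rw [Finset.card_range] at this
    omega

lemma upclosed_Ico {S : Finset ℕ} {b : ℕ} (hS : S ⊆ range b)
    (hup : ∀ j ∈ S, ∀ j', j ≤ j' → j' < b → j' ∈ S) :
    S = Ico (b - S.card) b := by
  ext j
  simp only [mem_Ico]
  constructor
  · intro hj
    have hjb : j < b := mem_range.1 (hS hj)
    refine ⟨?_, hjb⟩
    have hsub : Ico j b ⊆ S := by
      intro x hx
      rw [mem_Ico] at hx
      exact hup j hj x hx.1 hx.2
    have := Finset.card_le_card hsub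
    rw [Nat.card_Ico] at this
    omega
  · rintro ⟨h1, h2⟩
    by_contra hjS
    have hsub : S ⊆ Ico (j + 1) b := by
      intro x hx
      rw [mem_Ico]
      refine ⟨?_, mem_range.1 (hS hx)⟩
      by_contra hc
      exact hjS (hup x hx j (by omega) h2)
    have := Finset.card_le_card hsub
    rw [Nat.card_Ico] at this
    omega

lemma downclosed_Ico {S : Finset ℕ} {a b : ℕ} (hS : S ⊆ Ico a b)
    (hdc : ∀ j ∈ S, ∀ j', a ≤ j' → j' ≤ j → j' ∈ S) :
    S = Ico a (a + S.card) := by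
  ext j
  simp only [mem_Ico]
  constructor
  · intro hj
    have hj2 := mem_Ico.1 (hS hj)
    refine ⟨hj2.1, ?_⟩
    have hsub : Ico a (j + 1) ⊆ S := by
      intro x hx
      rw [mem_Ico] at hx
      exact hdc j hj x hx.1 (by omega)
    have := Finset.card_le_card hsub
    rw [Nat.card_Ico] at this
    omega
  · rintro ⟨h1, h2⟩
    by_contra hjS
    have hsub : S ⊆ Ico a j := by
      intro x hx
      rw [mem_Ico]
      refine ⟨(mem_Ico.1 (hS hx)).1, ?_⟩
      by_contra hc
      exact hjS (hdc x hx j h1 (by omega))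
    have := Finset.card_le_card hsub
    rw [Nat.card_Ico] at this
    omega

/-! ### The Bender–Knuth involution -/

/-- A cell is *free* (for the Bender–Knuth move exchanging `k` and `k + 1`) if it
contains `k` with no `k + 1` directly below, or contains `k + 1` with no `k` directly
above. -/
def FreeCell (T : ℕ × ℕ → ℕ) (k : ℕ) (p : ℕ × ℕ) : Prop :=
  (T p = k ∧ T (p.1 + 1, p.2) ≠ k + 1) ∨ (T p = k + 1 ∧ (p.1 = 0 ∨ T (p.1 - 1, p.2) ≠ k))

instance (T : ℕ × ℕ → ℕ) (k : ℕ) (p : ℕ × ℕ) : Decidable (FreeCell T k p) := by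
  unfold FreeCell; infer_instance

/-- number of entries `≤ m` in row `i` -/
def rle (lam : ℕ → ℕ) (T : ℕ × ℕ → ℕ) (m i : ℕ) : ℕ :=
  ((range (lam i)).filter (fun j => T (i, j) ≤ m)).card

/-- number of free `k`-cells in row `i` -/
def fKn (lam : ℕ → ℕ) (T : ℕ × ℕ → ℕ) (k i : ℕ) : ℕ :=
  ((range (lam i)).filter (fun j => FreeCell T k (i, j) ∧ T (i, j) = k)).card

/-- number of free `(k+1)`-cells in row `i` -/
def f1n (lam : ℕ → ℕ) (T : ℕ × ℕ → ℕ) (k i : ℕ) : ℕ :=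
  ((range (lam i)).filter (fun j => FreeCell T k (i, j) ∧ T (i, j) = k + 1)).card

/-- The Bender–Knuth involution exchanging the numbers of `k`'s and `(k+1)`'s. -/
def BK (lam : ℕ → ℕ) (T : ℕ × ℕ → ℕ) (k : ℕ) : ℕ × ℕ → ℕ := fun p =>
  if FreeCell T k p then
    (if p.2 < rle lam T k p.1 - fKn lam T k p.1 + f1n lam T k p.1 then k else k + 1)
  else T p

section BKFacts

variable {N : ℕ} {lam : ℕ → ℕ} {T : ℕ × ℕ → ℕ} {k : ℕ}
variable (h : IsSkewSSYT zlo lam T) (hmono : Antitone lam) (hk : 1 ≤ k)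

/-- left endpoint of the free block in row `i` -/
def pI (lam : ℕ → ℕ) (T : ℕ × ℕ → ℕ) (k i : ℕ) : ℕ :=
  rle lam T k i - fKn lam T k i

/-- right endpoint of the free block in row `i` -/
def qI (lam : ℕ → ℕ) (T : ℕ × ℕ → ℕ) (k i : ℕ) : ℕ :=
  rle lam T k i + f1n lam T k i

lemma BK_eq (i j : ℕ) : BK lam T k (i, j) =
    if FreeCell T k (i, j) then
      (if j < pI lam T k i + f1n lam T k i then k else k + 1)
    else T (i, j) := rfl

include h

lemma rle_le (m i : ℕ) : rle lam T m i ≤ lam i :=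
  le_trans (Finset.card_le_card (Finset.filter_subset _ _)) (le_of_eq (Finset.card_range _))

omit h

include h hmono

lemma rle_iff {i j : ℕ} (hj : j < lam i) (m : ℕ) :
    T (i, j) ≤ m ↔ j < rle lam T m i := by
  have hdc : ∀ x ∈ (range (lam i)).filter (fun j => T (i, j) ≤ m),
      ∀ x', x' ≤ x → x' ∈ (range (lam i)).filter (fun j => T (i, j) ≤ m) := by
    intro x hx x' hx'
    simp only [mem_filter, mem_range] at hx ⊢
    refine ⟨by omega, le_trans (ssyt_row h hx' hx.1) hx.2⟩
  have heq := downclosed_range hdc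
  constructor
  · intro hT
    have : j ∈ (range (lam i)).filter (fun j => T (i, j) ≤ m) := by
      simp only [mem_filter, mem_range]; exact ⟨hj, hT⟩
    rw [heq, mem_range] at this
    exact this
  · intro hlt
    have : j ∈ (range (lam i)).filter (fun j => T (i, j) ≤ m) := by
      rw [heq, mem_range]; exact hlt
    exact (Finset.mem_filter.1 this).2

lemma fKn_le (i : ℕ) : fKn lam T k i ≤ rle lam T k i := by
  apply Finset.card_le_card
  intro j hj
  simp only [mem_filter, mem_range] at hj ⊢
  exact ⟨hj.1, le_of_eq hj.2.2⟩

include hk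

/-- the free `k`-cells of row `i` are exactly `[pI, rle k)` -/
lemma freeK_iff {i j : ℕ} (hj : j < lam i) :
    (FreeCell T k (i, j) ∧ T (i, j) = k) ↔ pI lam T k i ≤ j ∧ j < rle lam T k i := by
  have hfree : ∀ x, (FreeCell T k (i, x) ∧ T (i, x) = k) ↔
      (T (i, x) = k ∧ T (i + 1, x) ≠ k + 1) := by
    intro x
    unfold FreeCell
    constructor
    · rintro ⟨hf | hf, hval⟩
      · exact ⟨hval, hf.2⟩
      · omega
    · intro hf
      exact ⟨Or.inl hf, hf.1⟩
  have hS : (range (lam i)).filter (fun j => FreeCell T k (i, j) ∧ T (i, j) = k) ⊆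
      range (rle lam T k i) := by
    intro x hx
    simp only [mem_filter, mem_range] at hx
    rw [mem_range]
    exact (rle_iff h hmono hx.1 k).1 (le_of_eq hx.2.2)
  have hup : ∀ x ∈ (range (lam i)).filter (fun j => FreeCell T k (i, j) ∧ T (i, j) = k),
      ∀ x', x ≤ x' → x' < rle lam T k i →
      x' ∈ (range (lam i)).filter (fun j => FreeCell T k (i, j) ∧ T (i, j) = k) := by
    intro x hx x' hxx' hx'b
    simp only [mem_filter, mem_range, hfree] at hx ⊢
    obtain ⟨hxlam, hxk, hxbelow⟩ := hx
    have hx'lam : x' < lam i := lt_of_lt_of_le hx'b (rle_le h k i)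
    have hx'le : T (i, x') ≤ k := (rle_iff h hmono hx'lam k).2 hx'b
    have hx'ge : T (i, x) ≤ T (i, x') := ssyt_row h hxx' hx'lam
    have hx'k : T (i, x') = k := by omega
    refine ⟨hx'lam, hx'k, ?_⟩
    intro hbelow
    apply hxbelow
    have hne : T (i + 1, x') ≠ 0 := by omega
    have hsh' : x' < lam (i + 1) := (ssyt_ne_zero_iff h).1 hne
    have hsh : x < lam (i + 1) := by omega
    have h1 : T (i + 1, x) ≤ T (i + 1, x') := ssyt_row h hxx' hsh'
    have h2 : T (i, x) < T (i + 1, x) := ssyt_col h (by omega) hsh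
    omega
  have heq := upclosed_Ico hS hup
  constructor
  · intro hf
    have : j ∈ (range (lam i)).filter (fun j => FreeCell T k (i, j) ∧ T (i, j) = k) := by
      simp only [mem_filter, mem_range]; exact ⟨hj, hf⟩
    rw [heq, mem_Ico] at this
    exact this
  · intro hpq
    have : j ∈ (range (lam i)).filter (fun j => FreeCell T k (i, j) ∧ T (i, j) = k) := by
      rw [heq, mem_Ico]; exact hpq
    exact (Finset.mem_filter.1 this).2

/-- the free `(k+1)`-cells of row `i` are exactly `[rle k, qI)` -/
lemma free1_iff {i j : ℕ} (hj : j < lam i) :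
    (FreeCell T k (i, j) ∧ T (i, j) = k + 1) ↔
      rle lam T k i ≤ j ∧ j < qI lam T k i := by
  have hfree : ∀ x, (FreeCell T k (i, x) ∧ T (i, x) = k + 1) ↔
      (T (i, x) = k + 1 ∧ (i = 0 ∨ T (i - 1, x) ≠ k)) := by
    intro x
    unfold FreeCell
    constructor
    · rintro ⟨hf | hf, hval⟩
      · omega
      · exact ⟨hval, hf.2⟩
    · intro hf
      exact ⟨Or.inr hf, hf.1⟩
  have hS : (range (lam i)).filter (fun j => FreeCell T k (i, j) ∧ T (i, j) = k + 1) ⊆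
      Ico (rle lam T k i) (lam i) := by
    intro x hx
    simp only [mem_filter, mem_range] at hx
    rw [mem_Ico]
    refine ⟨?_, hx.1⟩
    by_contra hc
    have := (rle_iff h hmono hx.1 k).2 (by omega)
    omega
  have hdc : ∀ x ∈ (range (lam i)).filter (fun j => FreeCell T k (i, j) ∧ T (i, j) = k + 1),
      ∀ x', rle lam T k i ≤ x' → x' ≤ x →
      x' ∈ (range (lam i)).filter (fun j => FreeCell T k (i, j) ∧ T (i, j) = k + 1) := by
    intro x hx x' hx'b hxx'
    simp only [mem_filter, mem_range, hfree] at hx ⊢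
    obtain ⟨hxlam, hxk, hxabove⟩ := hx
    have hx'lam : x' < lam i := by omega
    have hx'gt : ¬ T (i, x') ≤ k := fun hc => by
      have := (rle_iff h hmono hx'lam k).1 hc; omega
    have hle : T (i, x') ≤ T (i, x) := ssyt_row h hxx' hxlam
    have hx'k : T (i, x') = k + 1 := by omega
    refine ⟨hx'lam, hx'k, ?_⟩
    rcases i with _ | i'
    · exact Or.inl rfl
    · right
      intro habv'
      rcases hxabove with h0 | habove
      · exact absurd h0 (by omega)
      · apply habove
        simp only [Nat.add_sub_cancel] at habv' ⊢
        have hxlam' : x < lam i' := lt_of_lt_of_le hxlam (hmono (Nat.le_succ i'))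
        have h1 : T (i', x') ≤ T (i', x) := ssyt_row h hxx' hxlam'
        have h2 : T (i', x) < T (i' + 1, x) := ssyt_col h hxlam' hxlam
        omega
  have heq := downclosed_Ico hS hdc
  have hcard : rle lam T k i +
      ((range (lam i)).filter (fun j => FreeCell T k (i, j) ∧ T (i, j) = k + 1)).card
      = qI lam T k i := rfl
  constructor
  · intro hf
    have : j ∈ (range (lam i)).filter (fun j => FreeCell T k (i, j) ∧ T (i, j) = k + 1) := by
      simp only [mem_filter, mem_range]; exact ⟨hj, hf⟩
    rw [heq, mem_Ico, hcard] at this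
    exact this
  · intro hpq
    have : j ∈ (range (lam i)).filter (fun j => FreeCell T k (i, j) ∧ T (i, j) = k + 1) := by
      rw [heq, mem_Ico, hcard]; exact hpq
    exact (Finset.mem_filter.1 this).2

end BKFacts

end SchurAux
namespace SchurAux
open Finset

section BKFacts2

variable {N : ℕ} {lam : ℕ → ℕ} {T : ℕ × ℕ → ℕ} {k : ℕ}
variable (h : IsSkewSSYT zlo lam T) (hmono : Antitone lam) (hk : 1 ≤ k)

lemma freeCell_def (i j : ℕ) : FreeCell T k (i, j) ↔
    (T (i, j) = k ∧ T (i + 1, j) ≠ k + 1) ∨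
      (T (i, j) = k + 1 ∧ (i = 0 ∨ T (i - 1, j) ≠ k)) := Iff.rfl

lemma free_val {i j : ℕ} (hf : FreeCell T k (i, j)) :
    T (i, j) = k ∨ T (i, j) = k + 1 := by
  rcases hf with hf | hf
  · exact Or.inl hf.1
  · exact Or.inr hf.1

include h hmono hk

lemma pI_le (i : ℕ) : pI lam T k i ≤ rle lam T k i := Nat.sub_le _ _

lemma f1n_le (i : ℕ) : qI lam T k i ≤ lam i := by
  have hS : (range (lam i)).filter (fun j => FreeCell T k (i, j) ∧ T (i, j) = k + 1) ⊆
      Ico (rle lam T k i) (lam i) := by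
    intro x hx
    simp only [mem_filter, mem_range] at hx
    rw [mem_Ico]
    refine ⟨?_, hx.1⟩
    by_contra hc
    have := (rle_iff h hmono hx.1 k).2 (by omega)
    omega
  have hcard := Finset.card_le_card hS
  rw [Nat.card_Ico] at hcard
  have := rle_le h (m := k) (i := i)
  unfold qI f1n
  omega

lemma pf1_le_qI (i : ℕ) : pI lam T k i + f1n lam T k i ≤ qI lam T k i := by
  have := pI_le h hmono hk (T := T) i
  unfold qI
  omega

lemma free_iff {i j : ℕ} (hj : j < lam i) :
    FreeCell T k (i, j) ↔ pI lam T k i ≤ j ∧ j < qI lam T k i := by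
  constructor
  · intro hf
    rcases free_val hf with hv | hv
    · have := (freeK_iff h hmono hk hj).1 ⟨hf, hv⟩
      have h2 := pI_le h hmono hk (T := T) i
      unfold qI
      omega
    · have := (free1_iff h hmono hk hj).1 ⟨hf, hv⟩
      have h2 := pI_le h hmono hk (T := T) i
      omega
  · rintro ⟨h1, h2⟩
    by_cases hb : j < rle lam T k i
    · exact ((freeK_iff h hmono hk hj).2 ⟨h1, hb⟩).1
    · exact ((free1_iff h hmono hk hj).2 ⟨by omega, h2⟩).1

lemma BK_val_low {i j : ℕ} (hj : j < lam i) (hlow : j < pI lam T k i) :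
    BK lam T k (i, j) = T (i, j) := by
  rw [BK_eq, if_neg]
  intro hf
  have := (free_iff h hmono hk hj).1 hf
  omega

lemma BK_val_high {i j : ℕ} (hj : j < lam i) (hhigh : qI lam T k i ≤ j) :
    BK lam T k (i, j) = T (i, j) := by
  rw [BK_eq, if_neg]
  intro hf
  have := (free_iff h hmono hk hj).1 hf
  omega

lemma BK_val_k {i j : ℕ} (hj : j < lam i) (h1 : pI lam T k i ≤ j)
    (h2 : j < pI lam T k i + f1n lam T k i) :
    BK lam T k (i, j) = k := by
  have hq := pf1_le_qI h hmono hk (T := T) i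
  rw [BK_eq, if_pos ((free_iff h hmono hk hj).2 ⟨h1, by omega⟩), if_pos h2]

lemma BK_val_k1 {i j : ℕ} (hj : j < lam i) (h1 : pI lam T k i + f1n lam T k i ≤ j)
    (h2 : j < qI lam T k i) :
    BK lam T k (i, j) = k + 1 := by
  have hp := pI_le h hmono hk (T := T) i
  rw [BK_eq, if_pos ((free_iff h hmono hk hj).2 ⟨by omega, h2⟩), if_neg (by omega)]

lemma BK_val_off {i j : ℕ} (hj : ¬ j < lam i) : BK lam T k (i, j) = 0 := by
  have hz : T (i, j) = 0 := ssyt_zero h hj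
  rw [BK_eq, if_neg]
  · exact hz
  · intro hf
    rcases free_val hf with hv | hv <;> omega

lemma T_val_low {i j : ℕ} (hj : j < lam i) (hlow : j < pI lam T k i) : T (i, j) ≤ k := by
  have hp := pI_le h hmono hk (T := T) i
  exact (rle_iff h hmono hj k).2 (by omega)

lemma T_val_high {i j : ℕ} (hj : j < lam i) (hhigh : qI lam T k i ≤ j) :
    k + 1 ≤ T (i, j) := by
  have : ¬ T (i, j) ≤ k := by
    intro hc
    have := (rle_iff h hmono hj k).1 hc
    unfold qI at hhigh
    omega
  omega

lemma T_val_freeK {i j : ℕ} (hj : j < lam i) (h1 : pI lam T k i ≤ j)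
    (h2 : j < rle lam T k i) : T (i, j) = k :=
  ((freeK_iff h hmono hk hj).2 ⟨h1, h2⟩).2

lemma T_val_free1 {i j : ℕ} (hj : j < lam i) (h1 : rle lam T k i ≤ j)
    (h2 : j < qI lam T k i) : T (i, j) = k + 1 :=
  ((free1_iff h hmono hk hj).2 ⟨h1, h2⟩).2

/-- `BK` is at most `k` strictly left of `pI + f1n` -/
lemma BK_le_zone {i j : ℕ} (hj : j < lam i) (h2 : j < pI lam T k i + f1n lam T k i) :
    BK lam T k (i, j) ≤ k := by
  by_cases hlow : j < pI lam T k i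
  · rw [BK_val_low h hmono hk hj hlow]
    exact T_val_low h hmono hk hj hlow
  · rw [BK_val_k h hmono hk hj (by omega) h2]

/-- `BK` is at least `k+1` from `pI + f1n` on -/
lemma BK_ge_zone {i j : ℕ} (hj : j < lam i) (h2 : pI lam T k i + f1n lam T k i ≤ j) :
    k + 1 ≤ BK lam T k (i, j) := by
  by_cases hhigh : j < qI lam T k i
  · rw [BK_val_k1 h hmono hk hj h2 hhigh]
  · rw [BK_val_high h hmono hk hj (by omega)]
    exact T_val_high h hmono hk hj (by omega)

lemma BK_isSSYT : IsSkewSSYT zlo lam (BK lam T k) := by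
  refine ⟨?_, ?_, ?_, ?_⟩
  · rintro ⟨i, j⟩ hp
    rw [inShape_iff] at hp
    rw [BK_eq]
    split
    · split <;> omega
    · exact ssyt_pos h hp
  · rintro ⟨i, j⟩ hp
    rw [inShape_iff] at hp
    exact BK_val_off h hmono hk hp
  · intro i j j' hp hjj' hp'
    rw [inShape_iff] at hp hp'
    simp only at hp hp'
    by_cases hz1 : j' < pI lam T k i + f1n lam T k i
    · -- both in the low zone
      by_cases hz0 : j' < pI lam T k i
      · rw [BK_val_low h hmono hk hp (by omega), BK_val_low h hmono hk hp' hz0]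
        exact ssyt_row h hjj' hp'
      · have hle := BK_le_zone h hmono hk hp (by omega)
        rw [BK_val_k h hmono hk hp' (by omega) hz1]
        omega
    · by_cases hz2 : pI lam T k i + f1n lam T k i ≤ j
      · -- both in the high zone
        by_cases hz3 : qI lam T k i ≤ j
        · rw [BK_val_high h hmono hk hp hz3, BK_val_high h hmono hk hp' (by omega)]
          exact ssyt_row h hjj' hp'
        · have hge := BK_ge_zone h hmono hk hp' (by omega)
          rw [BK_val_k1 h hmono hk hp hz2 (by omega)]
          omega
      · have hle := BK_le_zone h hmono hk hp (by omega)
        have hge := BK_ge_zone h hmono hk hp' (by omega)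
        omega
  · intro i j hp hp'
    rw [inShape_iff] at hp hp'
    simp only at hp hp'
    by_cases hf1 : FreeCell T k (i, j) <;> by_cases hf2 : FreeCell T k (i + 1, j)
    · -- both free: impossible
      exfalso
      have hv1 := free_val hf1
      have hv2 := free_val hf2
      have hcol := ssyt_col h hp hp'
      have h1 : T (i, j) = k := by omega
      have h2 : T (i + 1, j) = k + 1 := by omega
      rcases (freeCell_def i j).1 hf1 with hc | hc <;> omega
    · -- (i,j) free, below not free
      have hv1 := free_val hf1
      have hbelow : k + 2 ≤ T (i + 1, j) := by
        have hcol := ssyt_col h hp hp'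
        rcases (freeCell_def i j).1 hf1 with hc | hc
        · omega
        · omega
      have : BK lam T k (i + 1, j) = T (i + 1, j) := by rw [BK_eq, if_neg hf2]
      rw [this, BK_eq, if_pos hf1]
      split <;> omega
    · -- below free, (i,j) not free
      have hv2 := free_val hf2
      have habove : T (i, j) < k := by
        have hcol := ssyt_col h hp hp'
        rcases (freeCell_def (i + 1) j).1 hf2 with hc | hc
        · omega
        · have h2 := hc.2
          simp only [Nat.add_sub_cancel] at h2
          rcases h2 with h0 | hne
          · omega
          · omega
      have : BK lam T k (i, j) = T (i, j) := by rw [BK_eq, if_neg hf1]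
      rw [this, BK_eq, if_pos hf2]
      split <;> omega
    · rw [BK_eq, if_neg hf1, BK_eq, if_neg hf2]
      exact ssyt_col h hp hp'

lemma BK_mem_Tabs (hT : T ∈ Tabs N lam) (hkN : k + 1 ≤ N) : BK lam T k ∈ Tabs N lam := by
  refine ⟨BK_isSSYT h hmono hk, ?_⟩
  rintro ⟨i, j⟩
  rw [BK_eq]
  split
  · split <;> omega
  · exact hT.2 (i, j)

end BKFacts2

end SchurAux
namespace SchurAux
open Finset

section BKFacts3

variable {N : ℕ} {lam : ℕ → ℕ} {T : ℕ × ℕ → ℕ} {k : ℕ}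
variable (h : IsSkewSSYT zlo lam T) (hmono : Antitone lam) (hk : 1 ≤ k)

include h hmono hk

/-- The Bender–Knuth move preserves free cells. -/
lemma BK_free_iff (p : ℕ × ℕ) : FreeCell (BK lam T k) k p ↔ FreeCell T k p := by
  obtain ⟨i, j⟩ := p
  by_cases hsh : j < lam i
  swap
  · -- off the shape: both sides fail
    constructor
    · intro hf
      rcases free_val hf with hv | hv <;>
        rw [BK_val_off h hmono hk hsh] at hv <;> omega
    · intro hf
      rcases free_val hf with hv | hv <;> rw [ssyt_zero h hsh] at hv <;> omega
  constructor
  · -- new free cells are old free cells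
    intro hf
    by_contra hnf
    have hval : BK lam T k (i, j) = T (i, j) := by rw [BK_eq, if_neg hnf]
    rcases free_val hf with hv | hv
    · -- value k, not free: paired, below is k+1 and below is unchanged
      rw [hval] at hv
      have hbelow : T (i + 1, j) = k + 1 := by
        by_contra hc
        exact hnf (Or.inl ⟨hv, hc⟩)
      have hnf2 : ¬ FreeCell T k (i + 1, j) := by
        rw [freeCell_def]
        push_neg
        simp only [Nat.add_sub_cancel]
        exact ⟨fun hc => absurd hbelow (by omega), fun hc => ⟨by omega, hv⟩⟩
      have hbelow' : BK lam T k (i + 1, j) = k + 1 := by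
        rw [BK_eq, if_neg hnf2]; exact hbelow
      rcases (freeCell_def i j).1 hf with hc | hc
      · exact hc.2 hbelow'
      · rw [BK_eq, if_neg hnf] at hc; omega
    · -- value k+1, not free: paired, above is k and above is unchanged
      rw [hval] at hv
      have habove : ¬ (i = 0 ∨ T (i - 1, j) ≠ k) := by
        intro hc
        exact hnf (Or.inr ⟨hv, hc⟩)
      push_neg at habove
      obtain ⟨hi0, hab⟩ := habove
      obtain ⟨i', rfl⟩ : ∃ i', i = i' + 1 := ⟨i - 1, by omega⟩
      simp only [Nat.add_sub_cancel] at hab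
      have hnf2 : ¬ FreeCell T k (i', j) := by
        rw [freeCell_def]
        push_neg
        exact ⟨fun _ => hv, fun hc => absurd hab (by omega)⟩
      have hab' : BK lam T k (i', j) = k := by
        rw [BK_eq, if_neg hnf2]; exact hab
      rcases (freeCell_def (i' + 1) j).1 hf with hc | hc
      · rw [BK_eq, if_neg hnf] at hc; omega
      · rcases hc.2 with h0 | hne
        · omega
        · simp only [Nat.add_sub_cancel] at hne
          exact hne hab'
  · -- old free cells are new free cells
    intro hf
    have hreg := (free_iff h hmono hk hsh).1 hf
    have hq := pf1_le_qI h hmono hk (T := T) i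
    by_cases hzone : j < pI lam T k i + f1n lam T k i
    · -- new value k
      have hvk : BK lam T k (i, j) = k := BK_val_k h hmono hk hsh (by omega) hzone
      refine Or.inl ⟨hvk, ?_⟩
      show BK lam T k (i + 1, j) ≠ k + 1
      intro hc
      by_cases hf2 : FreeCell T k (i + 1, j)
      · -- below free: old values force a contradiction
        have hv2 := free_val hf2
        have hsh2 : j < lam (i + 1) := by
          have hne : T (i + 1, j) ≠ 0 := by rcases hv2 with hv | hv <;> omega
          exact (ssyt_ne_zero_iff h).1 hne
        have hcol := ssyt_col h hsh hsh2
        have hv1 := free_val hf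
        have h1 : T (i, j) = k := by omega
        have h2 : T (i + 1, j) = k + 1 := by omega
        rcases (freeCell_def i j).1 hf with hc' | hc' <;> omega
      · -- below not free: below unchanged equals k+1, contradicting freeness of (i, j)
        rw [BK_eq, if_neg hf2] at hc
        have hsh2 : j < lam (i + 1) := by
          have hne : T (i + 1, j) ≠ 0 := by omega
          exact (ssyt_ne_zero_iff h).1 hne
        have hcol := ssyt_col h hsh hsh2
        rcases (freeCell_def i j).1 hf with hc' | hc'
        · exact hc'.2 hc
        · omega
    · -- new value k + 1
      have hvk : BK lam T k (i, j) = k + 1 :=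
        BK_val_k1 h hmono hk hsh (by omega) hreg.2
      refine Or.inr ⟨hvk, ?_⟩
      show i = 0 ∨ BK lam T k (i - 1, j) ≠ k
      rcases i with _ | i'
      · exact Or.inl rfl
      · right
        simp only [Nat.add_sub_cancel]
        intro hc
        by_cases hf2 : FreeCell T k (i', j)
        · have hv2 := free_val hf2
          have hsh2 : j < lam i' := lt_of_lt_of_le hsh (hmono (Nat.le_succ i'))
          have hcol := ssyt_col h hsh2 hsh
          have hv1 := free_val hf
          have h1 : T (i', j) = k := by omega
          have h2 : T (i' + 1, j) = k + 1 := by omega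
          rcases (freeCell_def i' j).1 hf2 with hc' | hc' <;> omega
        · rw [BK_eq, if_neg hf2] at hc
          have hsh2 : j < lam i' := lt_of_lt_of_le hsh (hmono (Nat.le_succ i'))
          have hcol := ssyt_col h hsh2 hsh
          -- T (i', j) = k not free means below (= our cell) is k + 1
          have hbelow : T (i' + 1, j) = k + 1 := by
            by_contra hcc
            exact hf2 (Or.inl ⟨hc, hcc⟩)
          -- then our cell has k above, so it is not free: contradiction
          rcases (freeCell_def (i' + 1) j).1 hf with hc' | hc'
          · omega
          · rcases hc'.2 with h0 | hne
            · omega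
            · simp only [Nat.add_sub_cancel] at hne
              exact hne hc
  
lemma BK_rle (i : ℕ) :
    rle lam (BK lam T k) k i = pI lam T k i + f1n lam T k i := by
  have hq := pf1_le_qI h hmono hk (T := T) i
  have hql := f1n_le h hmono hk (T := T) i
  have heq : (range (lam i)).filter (fun j => BK lam T k (i, j) ≤ k) =
      range (pI lam T k i + f1n lam T k i) := by
    ext j
    simp only [mem_filter, mem_range]
    constructor
    · rintro ⟨hj, hbk⟩
      by_contra hc
      push_neg at hc
      by_cases hlt : j < qI lam T k i
      · rw [BK_val_k1 h hmono hk hj hc hlt] at hbk; omega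
      · rw [BK_val_high h hmono hk hj (by omega)] at hbk
        have := T_val_high h hmono hk hj (by omega)
        omega
    · intro hj
      have hjl : j < lam i := by omega
      refine ⟨hjl, ?_⟩
      by_cases hlow : j < pI lam T k i
      · rw [BK_val_low h hmono hk hjl hlow]
        exact T_val_low h hmono hk hjl hlow
      · rw [BK_val_k h hmono hk hjl (by omega) hj]
  unfold rle
  rw [heq, Finset.card_range]

lemma BK_fKn (i : ℕ) : fKn lam (BK lam T k) k i = f1n lam T k i := by
  have hq := pf1_le_qI h hmono hk (T := T) i
  have hql := f1n_le h hmono hk (T := T) i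
  have heq : (range (lam i)).filter
        (fun j => FreeCell (BK lam T k) k (i, j) ∧ BK lam T k (i, j) = k) =
      Ico (pI lam T k i) (pI lam T k i + f1n lam T k i) := by
    ext j
    simp only [mem_filter, mem_range, mem_Ico]
    constructor
    · rintro ⟨hj, hfree, hbk⟩
      have hf := (BK_free_iff h hmono hk (i, j)).1 hfree
      have hreg := (free_iff h hmono hk hj).1 hf
      refine ⟨hreg.1, ?_⟩
      by_contra hc
      rw [BK_val_k1 h hmono hk hj (by omega) hreg.2] at hbk
      omega
    · rintro ⟨h1, h2⟩
      have hjl : j < lam i := by omega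
      refine ⟨hjl, ?_, BK_val_k h hmono hk hjl h1 h2⟩
      rw [BK_free_iff h hmono hk]
      exact (free_iff h hmono hk hjl).2 ⟨h1, by omega⟩
  unfold fKn
  rw [heq, Nat.card_Ico]
  omega

lemma BK_f1n (i : ℕ) : f1n lam (BK lam T k) k i = fKn lam T k i := by
  have hq := pf1_le_qI h hmono hk (T := T) i
  have hql := f1n_le h hmono hk (T := T) i
  have hfk := fKn_le h hmono (T := T) (k := k) (i := i)
  have heq : (range (lam i)).filter
        (fun j => FreeCell (BK lam T k) k (i, j) ∧ BK lam T k (i, j) = k + 1) =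
      Ico (pI lam T k i + f1n lam T k i) (qI lam T k i) := by
    ext j
    simp only [mem_filter, mem_range, mem_Ico]
    constructor
    · rintro ⟨hj, hfree, hbk⟩
      have hf := (BK_free_iff h hmono hk (i, j)).1 hfree
      have hreg := (free_iff h hmono hk hj).1 hf
      refine ⟨?_, hreg.2⟩
      by_contra hc
      rw [BK_val_k h hmono hk hj hreg.1 (by omega)] at hbk
      omega
    · rintro ⟨h1, h2⟩
      have hjl : j < lam i := by omega
      refine ⟨hjl, ?_, BK_val_k1 h hmono hk hjl h1 h2⟩
      rw [BK_free_iff h hmono hk]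
      exact (free_iff h hmono hk hjl).2 ⟨by omega, h2⟩
  unfold f1n
  rw [heq, Nat.card_Ico]
  unfold qI pI at *
  omega

/-- The Bender–Knuth move is an involution. -/
lemma BK_BK : BK lam (BK lam T k) k = T := by
  have h' := BK_isSSYT h hmono hk
  funext p
  obtain ⟨i, j⟩ := p
  by_cases hsh : j < lam i
  swap
  · rw [BK_val_off h' hmono hk hsh, ssyt_zero h hsh]
  by_cases hf : FreeCell T k (i, j)
  swap
  · have h1 : ¬ FreeCell (BK lam T k) k (i, j) := fun hc =>
      hf ((BK_free_iff h hmono hk (i, j)).1 hc)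
    rw [BK_eq, if_neg h1, BK_eq, if_neg hf]
  · have hreg := (free_iff h hmono hk hsh).1 hf
    have hf' : FreeCell (BK lam T k) k (i, j) := (BK_free_iff h hmono hk (i, j)).2 hf
    have hfk := fKn_le h hmono (T := T) (k := k) (i := i)
    rw [BK_eq, if_pos hf']
    unfold pI
    rw [BK_rle h hmono hk, BK_fKn h hmono hk, BK_f1n h hmono hk]
    have hthresh : pI lam T k i + f1n lam T k i - f1n lam T k i + fKn lam T k i
        = rle lam T k i := by
      unfold pI
      omega
    rw [hthresh]
    by_cases hb : j < rle lam T k i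
    · rw [if_pos hb]
      exact (T_val_freeK h hmono hk hsh hreg.1 hb).symm
    · rw [if_neg hb]
      exact (T_val_free1 h hmono hk hsh (by omega) hreg.2).symm

end BKFacts3

end SchurAux
namespace SchurAux
open Finset

section BKCount

variable {N : ℕ} {lam : ℕ → ℕ} {T : ℕ × ℕ → ℕ} {k : ℕ}

/-- paired `k`-cells of row `i` -/
def PKn (lam : ℕ → ℕ) (T : ℕ × ℕ → ℕ) (k i : ℕ) : Finset ℕ :=
  (range (lam i)).filter (fun j => T (i, j) = k ∧ T (i + 1, j) = k + 1)

/-- paired `(k+1)`-cells of row `i` -/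
def PK1n (lam : ℕ → ℕ) (T : ℕ × ℕ → ℕ) (k i : ℕ) : Finset ℕ :=
  (range (lam i)).filter (fun j => T (i, j) = k + 1 ∧ ¬ (i = 0 ∨ T (i - 1, j) ≠ k))

variable (h : IsSkewSSYT zlo lam T) (hmono : Antitone lam) (hk : 1 ≤ k)

include h hmono

lemma PKn_shift (i : ℕ) : PKn lam T k i = PK1n lam T k (i + 1) := by
  ext j
  unfold PKn PK1n
  simp only [mem_filter, mem_range, Nat.add_sub_cancel]
  constructor
  · rintro ⟨hj, h1, h2⟩
    have hne : T (i + 1, j) ≠ 0 := by omega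
    exact ⟨(ssyt_ne_zero_iff h).1 hne, h2, by omega⟩
  · rintro ⟨hj, h1, h2⟩
    push_neg at h2
    exact ⟨lt_of_lt_of_le hj (hmono (Nat.le_succ i)), h2.2, h1⟩

omit h hmono

lemma PK1n_zero : PK1n lam T k 0 = ∅ := by
  unfold PK1n
  rw [Finset.filter_eq_empty_iff]
  intro j _
  simp

include h hmono hk

lemma card_row_T_k (i : ℕ) :
    ((range (lam 0)).filter (fun j => T (i, j) = k)).card
      = (PKn lam T k i).card + fKn lam T k i := by
  have hrle := rle_le h (m := k) (i := i)
  have hfk := fKn_le h hmono (T := T) (k := k) (i := i)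
  have heq : (range (lam 0)).filter (fun j => T (i, j) = k)
      = PKn lam T k i ∪ Ico (pI lam T k i) (rle lam T k i) := by
    ext j
    simp only [mem_filter, mem_range, mem_union, mem_Ico, PKn]
    constructor
    · rintro ⟨hj, hTj⟩
      have hne : T (i, j) ≠ 0 := by omega
      have hsh : j < lam i := (ssyt_ne_zero_iff h).1 hne
      by_cases hf : FreeCell T k (i, j)
      · exact Or.inr ((freeK_iff h hmono hk hsh).1 ⟨hf, hTj⟩)
      · left
        refine ⟨hsh, hTj, ?_⟩
        by_contra hc
        exact hf (Or.inl ⟨hTj, hc⟩)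
    · rintro (hm | hm)
      · exact ⟨lt_of_lt_of_le hm.1 (hmono (Nat.zero_le i)), hm.2.1⟩
      · have hsh : j < lam i := by omega
        refine ⟨lt_of_lt_of_le hsh (hmono (Nat.zero_le i)), ?_⟩
        exact ((freeK_iff h hmono hk hsh).2 hm).2
  rw [heq, Finset.card_union_of_disjoint, Nat.card_Ico]
  · unfold pI
    omega
  · rw [Finset.disjoint_left]
    intro j hj hj'
    simp only [PKn, mem_filter, mem_range] at hj
    rw [mem_Ico] at hj'
    have hsh : j < lam i := hj.1
    have := ((freeK_iff h hmono hk hsh).2 hj').1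
    rcases this with hc | hc
    · exact hc.2 hj.2.2
    · omega

lemma card_row_T_k1 (i : ℕ) :
    ((range (lam 0)).filter (fun j => T (i, j) = k + 1)).card
      = (PK1n lam T k i).card + f1n lam T k i := by
  have hq := f1n_le h hmono hk (T := T) i
  have heq : (range (lam 0)).filter (fun j => T (i, j) = k + 1)
      = PK1n lam T k i ∪ Ico (rle lam T k i) (qI lam T k i) := by
    ext j
    simp only [mem_filter, mem_range, mem_union, mem_Ico, PK1n]
    constructor
    · rintro ⟨hj, hTj⟩
      have hne : T (i, j) ≠ 0 := by omega
      have hsh : j < lam i := (ssyt_ne_zero_iff h).1 hne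
      by_cases hf : FreeCell T k (i, j)
      · exact Or.inr ((free1_iff h hmono hk hsh).1 ⟨hf, hTj⟩)
      · left
        refine ⟨hsh, hTj, ?_⟩
        intro hc
        exact hf (Or.inr ⟨hTj, hc⟩)
    · rintro (hm | hm)
      · exact ⟨lt_of_lt_of_le hm.1 (hmono (Nat.zero_le i)), hm.2.1⟩
      · have hsh : j < lam i := by omega
        refine ⟨lt_of_lt_of_le hsh (hmono (Nat.zero_le i)), ?_⟩
        exact ((free1_iff h hmono hk hsh).2 hm).2
  rw [heq, Finset.card_union_of_disjoint, Nat.card_Ico]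
  · unfold qI
    omega
  · rw [Finset.disjoint_left]
    intro j hj hj'
    simp only [PK1n, mem_filter, mem_range] at hj
    rw [mem_Ico] at hj'
    have hsh : j < lam i := hj.1
    have := ((free1_iff h hmono hk hsh).2 hj').1
    rcases this with hc | hc
    · omega
    · exact hj.2.2 hc.2

lemma card_row_BK_k (i : ℕ) :
    ((range (lam 0)).filter (fun j => BK lam T k (i, j) = k)).card
      = (PKn lam T k i).card + f1n lam T k i := by
  have h' := BK_isSSYT h hmono hk
  have hq := pf1_le_qI h hmono hk (T := T) i
  have hql := f1n_le h hmono hk (T := T) i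
  have heq : (range (lam 0)).filter (fun j => BK lam T k (i, j) = k)
      = PKn lam T k i ∪ Ico (pI lam T k i) (pI lam T k i + f1n lam T k i) := by
    ext j
    simp only [mem_filter, mem_range, mem_union, mem_Ico, PKn]
    constructor
    · rintro ⟨hj, hTj⟩
      have hne : BK lam T k (i, j) ≠ 0 := by omega
      have hsh : j < lam i := (ssyt_ne_zero_iff h').1 hne
      by_cases hf : FreeCell T k (i, j)
      · right
        have hreg := (free_iff h hmono hk hsh).1 hf
        refine ⟨hreg.1, ?_⟩
        by_contra hc
        rw [BK_val_k1 h hmono hk hsh (by omega) hreg.2] at hTj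
        omega
      · rw [BK_eq, if_neg hf] at hTj
        left
        refine ⟨hsh, hTj, ?_⟩
        by_contra hc
        exact hf (Or.inl ⟨hTj, hc⟩)
    · rintro (hm | hm)
      · have hnf : ¬ FreeCell T k (i, j) := by
          intro hf
          rcases (freeCell_def i j).1 hf with hc | hc
          · exact hc.2 hm.2.2
          · omega
        rw [BK_eq, if_neg hnf]
        exact ⟨lt_of_lt_of_le hm.1 (hmono (Nat.zero_le i)), hm.2.1⟩
      · have hsh : j < lam i := by omega
        exact ⟨lt_of_lt_of_le hsh (hmono (Nat.zero_le i)),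
          BK_val_k h hmono hk hsh hm.1 hm.2⟩
  rw [heq, Finset.card_union_of_disjoint, Nat.card_Ico]
  · omega
  · rw [Finset.disjoint_left]
    intro j hj hj'
    simp only [PKn, mem_filter, mem_range] at hj
    rw [mem_Ico] at hj'
    have hsh : j < lam i := hj.1
    have hf := (free_iff h hmono hk hsh).2 ⟨hj'.1, by omega⟩
    rcases (freeCell_def i j).1 hf with hc | hc
    · exact hc.2 hj.2.2
    · omega

lemma card_row_BK_k1 (i : ℕ) :
    ((range (lam 0)).filter (fun j => BK lam T k (i, j) = k + 1)).card
      = (PK1n lam T k i).card + fKn lam T k i := by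
  have h' := BK_isSSYT h hmono hk
  have hq := pf1_le_qI h hmono hk (T := T) i
  have hql := f1n_le h hmono hk (T := T) i
  have hfk := fKn_le h hmono (T := T) (k := k) (i := i)
  have heq : (range (lam 0)).filter (fun j => BK lam T k (i, j) = k + 1)
      = PK1n lam T k i ∪ Ico (pI lam T k i + f1n lam T k i) (qI lam T k i) := by
    ext j
    simp only [mem_filter, mem_range, mem_union, mem_Ico, PK1n]
    constructor
    · rintro ⟨hj, hTj⟩
      have hne : BK lam T k (i, j) ≠ 0 := by omega
      have hsh : j < lam i := (ssyt_ne_zero_iff h').1 hne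
      by_cases hf : FreeCell T k (i, j)
      · right
        have hreg := (free_iff h hmono hk hsh).1 hf
        refine ⟨?_, hreg.2⟩
        by_contra hc
        rw [BK_val_k h hmono hk hsh hreg.1 (by omega)] at hTj
        omega
      · rw [BK_eq, if_neg hf] at hTj
        left
        refine ⟨hsh, hTj, ?_⟩
        intro hc
        exact hf (Or.inr ⟨hTj, hc⟩)
    · rintro (hm | hm)
      · have hnf : ¬ FreeCell T k (i, j) := by
          intro hf
          rcases (freeCell_def i j).1 hf with hc | hc
          · omega
          · exact hm.2.2 hc.2
        rw [BK_eq, if_neg hnf]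
        exact ⟨lt_of_lt_of_le hm.1 (hmono (Nat.zero_le i)), hm.2.1⟩
      · have hsh : j < lam i := by omega
        exact ⟨lt_of_lt_of_le hsh (hmono (Nat.zero_le i)),
          BK_val_k1 h hmono hk hsh hm.1 hm.2⟩
  rw [heq, Finset.card_union_of_disjoint, Nat.card_Ico]
  · unfold qI pI at *
    omega
  · rw [Finset.disjoint_left]
    intro j hj hj'
    simp only [PK1n, mem_filter, mem_range] at hj
    rw [mem_Ico] at hj'
    have hsh : j < lam i := hj.1
    have hf := (free_iff h hmono hk hsh).2 ⟨by omega, hj'.2⟩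
    rcases (freeCell_def i j).1 hf with hc | hc
    · omega
    · exact hj.2.2 hc.2

end BKCount

section BKCount2

variable {N : ℕ} {lam : ℕ → ℕ} {T : ℕ × ℕ → ℕ} {k : ℕ}
variable (hT : T ∈ Tabs N lam) (hmono : Antitone lam)
  (hle : ∀ i, N ≤ i → lam i = 0) (hk : 1 ≤ k) (hkN : k + 1 ≤ N)

include hT hmono hle hk hkN

lemma sum_PKn_eq : ∑ i ∈ range N, (PKn lam T k i).card
    = ∑ i ∈ range N, (PK1n lam T k i).card := by
  have h := hT.1
  obtain ⟨n, rfl⟩ : ∃ n, N = n + 1 := ⟨N - 1, by omega⟩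
  rw [Finset.sum_range_succ' (fun i => (PK1n lam T k i).card) n]
  rw [PK1n_zero, Finset.card_empty, add_zero]
  rw [Finset.sum_range_succ]
  have hlast : PKn lam T k n = ∅ := by
    unfold PKn
    rw [Finset.filter_eq_empty_iff]
    intro j _
    have hz : T (n + 1, j) = 0 := ssyt_zero h (by rw [hle (n + 1) (le_refl _)]; omega)
    rintro ⟨_, hc⟩
    omega
  rw [hlast, Finset.card_empty, add_zero]
  apply Finset.sum_congr rfl
  intro i _
  rw [PKn_shift h hmono]

lemma entryCount_BK_k : entryCount (BK lam T k) k = entryCount T (k + 1) := by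
  have h := hT.1
  have hBT := BK_mem_Tabs h hmono hk hT hkN
  rw [entryCount_eq_sum hBT hmono k hk, entryCount_eq_sum hT hmono (k + 1) (by omega)]
  calc ∑ i ∈ range N, ((range (lam 0)).filter (fun j => BK lam T k (i, j) = k)).card
      = ∑ i ∈ range N, ((PKn lam T k i).card + f1n lam T k i) := by
        exact Finset.sum_congr rfl fun i _ => card_row_BK_k h hmono hk i
    _ = ∑ i ∈ range N, ((PK1n lam T k i).card + f1n lam T k i) := by
        rw [Finset.sum_add_distrib, Finset.sum_add_distrib,
          sum_PKn_eq hT hmono hle hk hkN]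
    _ = ∑ i ∈ range N, ((range (lam 0)).filter (fun j => T (i, j) = k + 1)).card := by
        exact Finset.sum_congr rfl fun i _ => (card_row_T_k1 h hmono hk i).symm

lemma entryCount_BK_k1 : entryCount (BK lam T k) (k + 1) = entryCount T k := by
  have h := hT.1
  have hBT := BK_mem_Tabs h hmono hk hT hkN
  rw [entryCount_eq_sum hBT hmono (k + 1) (by omega), entryCount_eq_sum hT hmono k hk]
  calc ∑ i ∈ range N, ((range (lam 0)).filter (fun j => BK lam T k (i, j) = k + 1)).card
      = ∑ i ∈ range N, ((PK1n lam T k i).card + fKn lam T k i) := by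
        exact Finset.sum_congr rfl fun i _ => card_row_BK_k1 h hmono hk i
    _ = ∑ i ∈ range N, ((PKn lam T k i).card + fKn lam T k i) := by
        rw [Finset.sum_add_distrib, Finset.sum_add_distrib,
          sum_PKn_eq hT hmono hle hk hkN]
    _ = ∑ i ∈ range N, ((range (lam 0)).filter (fun j => T (i, j) = k)).card := by
        exact Finset.sum_congr rfl fun i _ => (card_row_T_k h hmono hk i).symm

omit hT hmono hle hkN

lemma entryCount_BK_other (m : ℕ) (hm1 : m ≠ k) (hm2 : m ≠ k + 1) :
    entryCount (BK lam T k) m = entryCount T m := by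
  have hset : {p : ℕ × ℕ | BK lam T k p = m} = {p : ℕ × ℕ | T p = m} := by
    ext ⟨i, j⟩
    simp only [Set.mem_setOf_eq]
    rw [BK_eq]
    split
    · rename_i hf
      rcases free_val hf with hv | hv <;> split <;> omega
    · rfl
  rw [entryCount, entryCount, hset]

end BKCount2

end SchurAux
namespace SchurAux
open Finset

section Symm

variable {N : ℕ} {lam : ℕ → ℕ}
variable (hmono : Antitone lam) (hle : ∀ i, N ≤ i → lam i = 0)

include hmono hle

lemma content_BK_apply {T : ℕ × ℕ → ℕ} (hT : T ∈ Tabs N lam) {k : ℕ}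
    (hk : 1 ≤ k) (hkN : k + 1 ≤ N) (x : Fin N) :
    content N (BK lam T k) x =
      content N T (Equiv.swap (⟨k - 1, by omega⟩ : Fin N) (⟨k, by omega⟩ : Fin N) x) := by
  by_cases hxa : x = (⟨k - 1, by omega⟩ : Fin N)
  · subst hxa
    rw [Equiv.swap_apply_left, content_apply, content_apply]
    have e1 : (⟨k - 1, by omega⟩ : Fin N).val + 1 = k := by
      simp only []
      omega
    have e2 : (⟨k, by omega⟩ : Fin N).val + 1 = k + 1 := rfl
    rw [e1, e2]
    exact entryCount_BK_k hT hmono hle hk hkN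
  · by_cases hxb : x = (⟨k, by omega⟩ : Fin N)
    · subst hxb
      rw [Equiv.swap_apply_right, content_apply, content_apply]
      have e1 : (⟨k - 1, by omega⟩ : Fin N).val + 1 = k := by
        simp only []
        omega
      rw [e1]
      exact entryCount_BK_k1 hT hmono hle hk hkN
    · rw [Equiv.swap_apply_of_ne_of_ne hxa hxb, content_apply, content_apply]
      apply entryCount_BK_other hk
      · intro hc
        apply hxa
        apply Fin.ext
        simp only []
        omega
      · intro hc
        apply hxb
        apply Fin.ext
        simp only []
        omega

lemma content_BK_mapDomain {T : ℕ × ℕ → ℕ} (hT : T ∈ Tabs N lam) {k : ℕ}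
    (hk : 1 ≤ k) (hkN : k + 1 ≤ N) :
    Finsupp.mapDomain
        (⇑(Equiv.swap (⟨k - 1, by omega⟩ : Fin N) (⟨k, by omega⟩ : Fin N)))
        (content N T)
      = content N (BK lam T k) := by
  ext x
  rw [Finsupp.mapDomain_equiv_apply, content_BK_apply hmono hle hT hk hkN x,
    Equiv.symm_swap]

lemma rename_schurPoly_swap {k : ℕ} (hk : 1 ≤ k) (hkN : k + 1 ≤ N) :
    rename (⇑(Equiv.swap (⟨k - 1, by omega⟩ : Fin N) (⟨k, by omega⟩ : Fin N)))
        (schurPoly N lam)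
      = schurPoly N lam := by
  have hfin := tabs_finite hmono hle
  rw [schurPoly_eq_sum hfin, map_sum]
  have key : ∀ T ∈ hfin.toFinset,
      rename (⇑(Equiv.swap (⟨k - 1, by omega⟩ : Fin N) (⟨k, by omega⟩ : Fin N)))
          (tabWeight N T)
        = tabWeight N (BK lam T k) := by
    intro T hT'
    rw [Set.Finite.mem_toFinset] at hT'
    rw [tabWeight_eq, tabWeight_eq, rename_monomial,
      content_BK_mapDomain hmono hle hT' hk hkN]
  rw [Finset.sum_congr rfl key]
  apply Finset.sum_bij' (i := fun T _ => BK lam T k) (j := fun T _ => BK lam T k)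
  · intro T hT'
    rw [Set.Finite.mem_toFinset] at hT' ⊢
    exact BK_mem_Tabs hT'.1 hmono hk hT' hkN
  · intro T hT'
    rw [Set.Finite.mem_toFinset] at hT' ⊢
    exact BK_mem_Tabs hT'.1 hmono hk hT' hkN
  · intro T hT'
    rw [Set.Finite.mem_toFinset] at hT'
    exact BK_BK hT'.1 hmono hk
  · intro T hT'
    rw [Set.Finite.mem_toFinset] at hT'
    exact BK_BK hT'.1 hmono hk
  · intro T hT'
    rfl

lemma schurPoly_isSymmetric : MvPolynomial.IsSymmetric (schurPoly N lam) := by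
  intro σ
  rcases N with _ | n
  · have hσ : σ = 1 := by
      ext x
      exact x.elim0
    rw [hσ, Equiv.Perm.coe_one, rename_id, AlgHom.id_apply]
  · have hmem : σ ∈ Submonoid.closure
        (Set.range fun i : Fin n => Equiv.swap i.castSucc i.succ) := by
      rw [Equiv.Perm.mclosure_swap_castSucc_succ n]
      exact Submonoid.mem_top σ
    induction hmem using Submonoid.closure_induction with
    | mem τ hτ =>
        obtain ⟨i, rfl⟩ := hτ
        have ha : (i.castSucc : Fin (n + 1)) = ⟨(i.1 + 1) - 1, by omega⟩ := by
          apply Fin.ext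
          simp only [Fin.coe_castSucc]
          omega
        have hb : (i.succ : Fin (n + 1)) = ⟨i.1 + 1, by omega⟩ := by
          apply Fin.ext
          simp only [Fin.val_succ]
        have hres := rename_schurPoly_swap hmono hle (k := i.1 + 1) (by omega) (by omega)
        rw [← ha, ← hb] at hres
        exact hres
    | one => rw [Equiv.Perm.coe_one, rename_id, AlgHom.id_apply]
    | mul τ υ hτm hυm ih1 ih2 =>
        rw [Equiv.Perm.coe_mul, ← rename_rename, ih2, ih1]

end Symm

end SchurAux

set_option synthInstance.maxHeartbeats 1000000
set_option maxHeartbeats 4000000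

namespace SchurAux
open Finset

section BasisSec

variable {N : ℕ}

/-- The Schur polynomials as elements of the symmetric subalgebra. -/
noncomputable def sv (N : ℕ) (l : {l : ℕ → ℕ // IsPartition l ∧ ∀ i, N ≤ i → l i = 0}) :
    MvPolynomial.symmetricSubalgebra (Fin N) ℤ :=
  ⟨schurPoly N l.1, (mem_symmetricSubalgebra _).2 (schurPoly_isSymmetric l.2.1.1 l.2.2)⟩

/-- coefficient extraction as a linear functional on the symmetric subalgebra -/
noncomputable def coeffL (N : ℕ) (d : Fin N →₀ ℕ) :
    MvPolynomial.symmetricSubalgebra (Fin N) ℤ →ₗ[ℤ] ℤ :=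
  (MvPolynomial.lcoeff (R := ℤ) (σ := Fin N) d).comp
    (MvPolynomial.symmetricSubalgebra (Fin N) ℤ).val.toLinearMap

@[simp] lemma coeffL_apply (d : Fin N →₀ ℕ)
    (F : MvPolynomial.symmetricSubalgebra (Fin N) ℤ) :
    coeffL N d F = coeff d (F : MvPolynomial (Fin N) ℤ) := rfl

lemma partF_injective (l l' : {l : ℕ → ℕ // IsPartition l ∧ ∀ i, N ≤ i → l i = 0})
    (h : partF N l.1 = partF N l'.1) : l = l' := by
  apply Subtype.ext
  funext i
  by_cases hi : i < N
  · have := congrArg (fun f => f ⟨i, hi⟩) (congrArg Finsupp.toFun h)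
    simpa using (show partF N l.1 ⟨i, hi⟩ = partF N l'.1 ⟨i, hi⟩ from this)
  · rw [l.2.2 i (by omega), l'.2.2 i (by omega)]

lemma sv_linearIndependent : LinearIndependent ℤ (sv N) := by
  rw [linearIndependent_iff]
  intro c hc
  by_contra hne
  have hsupp : c.support.Nonempty := Finsupp.support_nonempty_iff.2 hne
  obtain ⟨ls, hlsmem, hmax⟩ :=
    Finset.exists_max_image c.support (fun l => toLex (partF N l.1)) hsupp
  have happ := congrArg (coeffL N (partF N ls.1)) hc
  rw [map_zero, Finsupp.linearCombination_apply, map_finsuppSum] at happ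
  rw [Finsupp.sum] at happ
  have hsum : ∑ l ∈ c.support, coeffL N (partF N ls.1) (c l • sv N l) = c ls := by
    rw [Finset.sum_eq_single ls]
    · rw [map_smul, coeffL_apply]
      have : ((sv N ls : MvPolynomial.symmetricSubalgebra (Fin N) ℤ) :
          MvPolynomial (Fin N) ℤ) = schurPoly N ls.1 := rfl
      rw [this, coeff_schurPoly_self ls.2.1.1 ls.2.2]
      simp
    · intro l hl hlne
      rw [map_smul, coeffL_apply]
      have : ((sv N l : MvPolynomial.symmetricSubalgebra (Fin N) ℤ) :
          MvPolynomial (Fin N) ℤ) = schurPoly N l.1 := rfl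
      rw [this, coeff_schurPoly_zero l.2.1.1 l.2.2]
      · simp
      · intro hle'
        have hge := hmax l hl
        have heq := le_antisymm hle' hge
        exact hlne (partF_injective l ls (by exact_mod_cast (toLex.injective heq).symm))
    · intro hns
      exact absurd hlsmem hns
  rw [hsum] at happ
  exact (Finsupp.mem_support_iff.1 hlsmem) happ

lemma sv_span : ⊤ ≤ Submodule.span ℤ (Set.range (sv N)) := by
  haveI hwf : WellFoundedLT (Lex (Fin N →₀ ℕ)) := Finsupp.Lex.wellFoundedLT_of_finite
  have H : ∀ d : Lex (Fin N →₀ ℕ), ∀ F : MvPolynomial.symmetricSubalgebra (Fin N) ℤ,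
      (∀ e ∈ (F : MvPolynomial (Fin N) ℤ).support, toLex e ≤ d) →
      F ∈ Submodule.span ℤ (Set.range (sv N)) := by
    intro d
    induction d using WellFoundedLT.induction with
    | _ d IH =>
      intro F hFd
      by_cases hF0 : (F : MvPolynomial (Fin N) ℤ) = 0
      · have : F = 0 := Subtype.ext (hF0.trans (ZeroMemClass.coe_zero _).symm)
        rw [this]
        exact Submodule.zero_mem _
      · have hsupp : (F : MvPolynomial (Fin N) ℤ).support.Nonempty :=
          Finset.nonempty_iff_ne_empty.2
            (fun hc => hF0 (MvPolynomial.support_eq_empty.1 hc))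
        obtain ⟨e0, he0mem, he0max⟩ :=
          Finset.exists_max_image (F : MvPolynomial (Fin N) ℤ).support
            (fun e => toLex e) hsupp
        -- the maximal exponent is antitone
        have hanti : ∀ u v : Fin N, u ≤ v → e0 v ≤ e0 u := by
          intro u v huv
          by_contra hlt
          push_neg at hlt
          have huvne : u < v := lt_of_le_of_ne huv (by rintro rfl; omega)
          set σ := Equiv.swap u v with hσ
          have hsym : MvPolynomial.IsSymmetric (F : MvPolynomial (Fin N) ℤ) :=
            (mem_symmetricSubalgebra _).1 F.2
          have hco : coeff (Finsupp.mapDomain σ e0) (F : MvPolynomial (Fin N) ℤ)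
              = coeff e0 (F : MvPolynomial (Fin N) ℤ) := by
            conv_lhs => rw [← hsym σ]
            exact coeff_rename_mapDomain (⇑σ) (Equiv.injective σ) _ e0
          have hmem2 : Finsupp.mapDomain (⇑σ) e0 ∈
              (F : MvPolynomial (Fin N) ℤ).support := by
            rw [MvPolynomial.mem_support_iff, hco]
            exact MvPolynomial.mem_support_iff.1 he0mem
          have hle2 := he0max _ hmem2
          have hgt : toLex e0 < toLex (Finsupp.mapDomain (⇑σ) e0) := by
            show Finsupp.Lex (· < ·) (· < ·) e0 (Finsupp.mapDomain (⇑σ) e0)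
            rw [Finsupp.lex_def]
            refine ⟨u, ?_, ?_⟩
            · intro w hw
              rw [Finsupp.mapDomain_equiv_apply, Equiv.symm_swap,
                Equiv.swap_apply_of_ne_of_ne (by exact ne_of_lt hw)
                  (by exact ne_of_lt (lt_trans hw huvne))]
            · rw [Finsupp.mapDomain_equiv_apply, Equiv.symm_swap, Equiv.swap_apply_left]
              exact hlt
          exact absurd hle2 (not_le.2 hgt)
        -- build the partition realizing e0
        set l : ℕ → ℕ := fun i => if h : i < N then e0 ⟨i, h⟩ else 0 with hldef
        have hlprop : IsPartition l ∧ ∀ i, N ≤ i → l i = 0 := by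
          refine ⟨⟨?_, ⟨N, fun i hi => dif_neg (by omega)⟩⟩, fun i hi => dif_neg (by omega)⟩
          intro a b hab
          by_cases hb : b < N
          · have ha : a < N := by omega
            rw [hldef]
            simp only [dif_pos ha, dif_pos hb]
            exact hanti ⟨a, ha⟩ ⟨b, hb⟩ hab
          · rw [hldef]
            simp only [dif_neg hb]
            exact Nat.zero_le _
        have hpf : partF N l = e0 := by
          ext x
          rw [partF_apply, hldef]
          simp only [dif_pos x.2, Fin.eta]
        set c : ℤ := coeff e0 (F : MvPolynomial (Fin N) ℤ) with hcdef
        set G := F - c • sv N ⟨l, hlprop⟩ with hGdef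
        have hGcoe : (G : MvPolynomial (Fin N) ℤ)
            = (F : MvPolynomial (Fin N) ℤ) - c • schurPoly N l := rfl
        have hsch_supp : ∀ e ∈ (schurPoly N l).support, toLex e ≤ toLex e0 := by
          intro e he
          rw [← hpf]
          by_contra hc
          rw [MvPolynomial.mem_support_iff] at he
          exact he (coeff_schurPoly_zero hlprop.1.1 hlprop.2 e hc)
        have hGsupp : ∀ e ∈ (G : MvPolynomial (Fin N) ℤ).support, toLex e < toLex e0 := by
          intro e he
          have hene : e ≠ e0 := by
            intro heq
            subst heq
            rw [MvPolynomial.mem_support_iff, hGcoe] at he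
            apply he
            rw [MvPolynomial.coeff_sub, MvPolynomial.coeff_smul, ← hpf,
              coeff_schurPoly_self hlprop.1.1 hlprop.2, hpf]
            simp [hcdef]
          have hele : toLex e ≤ toLex e0 := by
            rw [hGcoe] at he
            have := MvPolynomial.support_sub _ _ _ he
            rw [Finset.mem_union] at this
            rcases this with hin | hin
            · exact he0max e hin
            · have : e ∈ (schurPoly N l).support :=
                Finset.mem_of_subset MvPolynomial.support_smul hin
              exact hsch_supp e this
          exact lt_of_le_of_ne hele (fun hc => hene (toLex.injective hc))
        have hGmem : G ∈ Submodule.span ℤ (Set.range (sv N)) := by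
          by_cases hG0 : (G : MvPolynomial (Fin N) ℤ) = 0
          · rw [Subtype.ext (hG0.trans (ZeroMemClass.coe_zero _).symm)]
            exact Submodule.zero_mem _
          · have hGne : (G : MvPolynomial (Fin N) ℤ).support.Nonempty :=
              Finset.nonempty_iff_ne_empty.2
                (fun hc => hG0 (MvPolynomial.support_eq_empty.1 hc))
            obtain ⟨m, hmmem, hmmax⟩ :=
              Finset.exists_max_image (G : MvPolynomial (Fin N) ℤ).support
                (fun e => toLex e) hGne
            have hmlt : toLex m < d :=
              lt_of_lt_of_le (hGsupp m hmmem) (hFd e0 he0mem)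
            exact IH (toLex m) hmlt G (fun e he => hmmax e he)
        have hFeq : F = G + c • sv N ⟨l, hlprop⟩ := by
          rw [hGdef]
          abel
        rw [hFeq]
        exact Submodule.add_mem _ hGmem
          (Submodule.smul_mem _ _ (Submodule.subset_span ⟨⟨l, hlprop⟩, rfl⟩))
  rintro F -
  by_cases hF0 : (F : MvPolynomial (Fin N) ℤ) = 0
  · rw [Subtype.ext (hF0.trans (ZeroMemClass.coe_zero _).symm)]
    exact Submodule.zero_mem _
  · have hsupp : (F : MvPolynomial (Fin N) ℤ).support.Nonempty :=
      Finset.nonempty_iff_ne_empty.2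
        (fun hc => hF0 (MvPolynomial.support_eq_empty.1 hc))
    obtain ⟨e0, he0mem, he0max⟩ :=
      Finset.exists_max_image (F : MvPolynomial (Fin N) ℤ).support (fun e => toLex e) hsupp
    exact H (toLex e0) F he0max

end BasisSec

end SchurAux


set_option synthInstance.maxHeartbeats 1000000 in
/-- The Schur polynomials `s_λ(x_1, …, x_N)`, for `λ` ranging over partitions with at most
`N` nonzero parts, form a ℤ-basis of the module of symmetric polynomials
in `ℤ[x_1, …, x_N]`. -/
theorem schurPoly_basis (N : ℕ) (hN : 1 ≤ N) :
    ∃ b : Module.Basis {l : ℕ → ℕ // IsPartition l ∧ ∀ i, N ≤ i → l i = 0} ℤ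
        (MvPolynomial.symmetricSubalgebra (Fin N) ℤ),
      ∀ l : {l : ℕ → ℕ // IsPartition l ∧ ∀ i, N ≤ i → l i = 0},
        (b l : MvPolynomial (Fin N) ℤ) = schurPoly N l.val := by
  refine ⟨Module.Basis.mk SchurAux.sv_linearIndependent SchurAux.sv_span, ?_⟩
  intro l
  rw [Module.Basis.mk_apply]
  rfl
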